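/- Let n ≥ 1 and let f : [0,∞) → ℝ be continuous with f(s) > 0 for all s > 0 and ∫₀¹ f(z)/z dz < ∞. Define f̃(s) = ∫₀^s f(z)/z dz, F(s) = ∫₀^s f(z) dz, and F̃(s) = ∫₀^s f̃(z) dz for s ≥ 0. Assume: (A) either n = 1, or there exists p with 1 < p < n(n+2)/(n−1)² such that f(s) ≤ p·f̃(s) for all s > 0; and (B) there exist c > 0 and real numbers m₁, m₂ with 2/3 < m₂ < m₁ < 2(n+2)/(3n+2) such that f(s) ≥ c s^{m₁} f̃(s)^{2m₁−1} for all s ∈ (0,1] and f(s) ≥ c s^{m₂} f̃(s)^{2m₂−1} for all s > 1. Then: (i) there exist c' > 0 and real numbers γ₁, γ₂ with 1 < γ₂ < γ₁ and (n ≤ 2 or γ₁ < (n+2)/(n−2)) such that f(s)·f̃(s) ≥ c' s^{2γ₂} for all s > 1 and, if n ≥ 2, f(s)·f̃(s) ≥ c' s^{2γ₁} for all s ∈ (0,1]; (ii) there exist c'' > 0 and real numbers d₁, d₂ with 1 < d₂ < d₁ < (n+2)/n such that f(s)·f̃(s) ≥ c'' (F(s) + F̃(s))^{d₁} for all s ∈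 (0,1] and f(s)·f̃(s) ≥ c'' (F(s) + F̃(s))^{d₂} for all s > 1. -/

import Mathlib

open Set Filter MeasureTheory

/-- `f̃(s) = ∫₀^s f(z)/z dz`. -/
noncomputable def fTilde (f : ℝ → ℝ) (s : ℝ) : ℝ :=
  ∫ z in Ioc (0 : ℝ) s, f z / z

/-- `F(s) = ∫₀^s f(z) dz`. -/
noncomputable def bigF (f : ℝ → ℝ) (s : ℝ) : ℝ :=
  ∫ z in Ioc (0 : ℝ) s, f z

/-- `F̃(s) = ∫₀^s f̃(z) dz`. -/
noncomputable def bigFTilde (f : ℝ → ℝ) (s : ℝ) : ℝ :=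
  ∫ z in Ioc (0 : ℝ) s, fTilde f z

section aux
variable {f : ℝ → ℝ} (hf_cont : ContinuousOn f (Ici 0))
  (hf_pos : ∀ s : ℝ, 0 < s → 0 < f s)
  (hf_int : IntegrableOn (fun z : ℝ => f z / z) (Ioc (0 : ℝ) 1))

include hf_cont hf_int in
lemma int_on {s : ℝ} (hs : 0 < s) : IntegrableOn (fun z : ℝ => f z / z) (Ioc (0 : ℝ) s) := by
  rcases le_total s 1 with h | h
  · exact hf_int.mono_set (Ioc_subset_Ioc_right h)
  · have h1 : IntegrableOn (fun z : ℝ => f z / z) (Ioc (1 : ℝ) s) := by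
      apply ContinuousOn.integrableOn_Icc (f := fun z : ℝ => f z / z) ?_ |>.mono_set Ioc_subset_Icc_self
      apply ContinuousOn.div (hf_cont.mono ?_) continuousOn_id
      · intro x hx; simp only [id]; intro h0; rw [h0] at hx; exact absurd hx.1 (by norm_num)
      · intro x hx; exact le_trans zero_le_one hx.1
    have : Ioc (0:ℝ) s = Ioc 0 1 ∪ Ioc 1 s := (Ioc_union_Ioc_eq_Ioc zero_le_one h).symm
    rw [this]
    exact hf_int.union h1

include hf_pos in
lemma ftilde_nonneg (s : ℝ) : 0 ≤ fTilde f s := by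
  apply setIntegral_nonneg measurableSet_Ioc
  intro x hx
  exact div_nonneg (hf_pos x hx.1).le hx.1.le

include hf_cont hf_pos hf_int in
lemma ftilde_mono : Monotone (fTilde f) := by
  intro a b hab
  rcases le_or_gt a 0 with ha | ha
  · have : Ioc (0:ℝ) a = ∅ := Ioc_eq_empty (by linarith [ha])
    rw [fTilde, this]
    simp only [setIntegral_empty]
    exact ftilde_nonneg hf_pos b
  · have hb : 0 < b := lt_of_lt_of_le ha hab
    have hsplit : Ioc (0:ℝ) b = Ioc 0 a ∪ Ioc a b := (Ioc_union_Ioc_eq_Ioc ha.le hab).symm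
    rw [fTilde, fTilde, hsplit, setIntegral_union (Ioc_disjoint_Ioc_of_le le_rfl) measurableSet_Ioc
      (int_on hf_cont hf_int ha) ((int_on hf_cont hf_int hb).mono_set (Ioc_subset_Ioc ha.le le_rfl))]
    have : 0 ≤ ∫ z in Ioc a b, f z / z := by
      apply setIntegral_nonneg measurableSet_Ioc
      intro x hx
      exact div_nonneg (hf_pos x (ha.trans hx.1)).le (ha.trans hx.1).le
    linarith

include hf_cont hf_pos hf_int in
lemma ftilde_pos {s : ℝ} (hs : 0 < s) : 0 < fTilde f s := by
  have h2 : 0 < s/2 := by linarith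
  have key : 0 < ∫ z in (s/2)..s, f z / z := by
    apply intervalIntegral.intervalIntegral_pos_of_pos_on
    · rw [intervalIntegrable_iff_integrableOn_Ioc_of_le (by linarith)]
      exact (int_on hf_cont hf_int hs).mono_set (Ioc_subset_Ioc h2.le le_rfl)
    · intro x hx
      exact div_pos (hf_pos x (h2.trans hx.1)) (h2.trans hx.1)
    · linarith
  rw [intervalIntegral.integral_of_le (by linarith)] at key
  have hmono := ftilde_mono hf_cont hf_pos hf_int (le_refl s)
  have hsplit : Ioc (0:ℝ) s = Ioc 0 (s/2) ∪ Ioc (s/2) s := (Ioc_union_Ioc_eq_Ioc h2.le (by linarith)).symm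
  rw [fTilde, hsplit, setIntegral_union (Ioc_disjoint_Ioc_of_le le_rfl) measurableSet_Ioc
      (int_on hf_cont hf_int h2) ((int_on hf_cont hf_int hs).mono_set (Ioc_subset_Ioc h2.le le_rfl))]
  have h0 : 0 ≤ ∫ z in Ioc 0 (s/2), f z / z := by
    apply setIntegral_nonneg measurableSet_Ioc
    intro x hx
    exact div_nonneg (hf_pos x hx.1).le hx.1.le
  linarith

include hf_cont hf_pos hf_int in
lemma ftilde_deriv {s : ℝ} (hs : 0 < s) : HasDerivAt (fTilde f) (f s / s) s := by
  have h2 : 0 < s/2 := by linarith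
  have hii : IntervalIntegrable (fun z : ℝ => f z / z) volume (s/2) s := by
    rw [intervalIntegrable_iff_integrableOn_Ioc_of_le (by linarith)]
    exact (int_on hf_cont hf_int hs).mono_set (Ioc_subset_Ioc h2.le le_rfl)
  have hc : ContinuousAt (fun z : ℝ => f z / z) s := by
    have : ContinuousOn (fun z : ℝ => f z / z) (Ioi 0) := by
      apply ContinuousOn.div (hf_cont.mono Ioi_subset_Ici_self) continuousOn_id
      intro x hx; exact ne_of_gt hx
    exact this.continuousAt (Ioi_mem_nhds hs)
  have hsm : StronglyMeasurableAtFilter (fun z : ℝ => f z / z) (nhds s) volume := by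
    apply ContinuousOn.stronglyMeasurableAtFilter (s := Ioi (0:ℝ)) isOpen_Ioi
    · apply ContinuousOn.div (hf_cont.mono Ioi_subset_Ici_self) continuousOn_id
      intro x hx; exact ne_of_gt hx
    · exact hs
  have hd : HasDerivAt (fun u => ∫ x in (s/2)..u, f x / x) (f s / s) s :=
    intervalIntegral.integral_hasDerivAt_right hii hsm hc
  have heq : (fTilde f) =ᶠ[nhds s] (fun u => fTilde f (s/2) + ∫ x in (s/2)..u, f x / x) := by
    filter_upwards [Ioi_mem_nhds (show s/2 < s by linarith)] with u hu
    have hu2 : s/2 ≤ u := le_of_lt hu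
    rw [intervalIntegral.integral_of_le hu2]
    have hsplit : Ioc (0:ℝ) u = Ioc 0 (s/2) ∪ Ioc (s/2) u := (Ioc_union_Ioc_eq_Ioc h2.le hu2).symm
    rw [fTilde, fTilde, hsplit, setIntegral_union (Ioc_disjoint_Ioc_of_le le_rfl) measurableSet_Ioc
      (int_on hf_cont hf_int h2) ((int_on hf_cont hf_int (h2.trans_le hu2)).mono_set (Ioc_subset_Ioc h2.le le_rfl))]
  exact (hd.const_add (fTilde f (s/2))).congr_of_eventuallyEq heq
end aux

section ode
variable {f : ℝ → ℝ} {c m : ℝ} (hc : 0 < c) (hm0 : 1/2 < m) (hm1 : m < 1)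
  (hf_cont : ContinuousOn f (Ici 0))
  (hf_pos : ∀ s : ℝ, 0 < s → 0 < f s)
  (hf_int : IntegrableOn (fun z : ℝ => f z / z) (Ioc (0 : ℝ) 1))

include hf_cont hf_pos hf_int hm0 hm1 in
lemma g_hasDeriv {x : ℝ} (hx : 0 < x) :
    HasDerivAt (fun t => fTilde f t ^ (2-2*m) - ((2-2*m)*c/m)*t^m)
      ((f x / x)*(2-2*m)*(fTilde f x)^(1-2*m) - ((2-2*m)*c/m)*(m*x^(m-1))) x := by
  have h1 : HasDerivAt (fun t => fTilde f t ^ (2-2*m))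
      ((f x / x)*(2-2*m)*(fTilde f x)^(2-2*m-1)) x :=
    (ftilde_deriv hf_cont hf_pos hf_int hx).rpow_const
      (Or.inl (ne_of_gt (ftilde_pos hf_cont hf_pos hf_int hx)))
  have h2 : HasDerivAt (fun t : ℝ => ((2-2*m)*c/m)*t^m) (((2-2*m)*c/m)*(m*x^(m-1))) x :=
    (Real.hasDerivAt_rpow_const (Or.inl (ne_of_gt hx))).const_mul _
  have := h1.sub h2
  rw [show (1:ℝ)-2*m = 2-2*m-1 by ring]
  exact this

include hc hm0 hm1 hf_cont hf_pos hf_int in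
lemma g_deriv_nonneg {x : ℝ} (hx : 0 < x)
    (hyp : c * x ^ m * fTilde f x ^ (2*m-1) ≤ f x) :
    0 ≤ (f x / x)*(2-2*m)*(fTilde f x)^(1-2*m) - ((2-2*m)*c/m)*(m*x^(m-1)) := by
  have hfx := ftilde_pos hf_cont hf_pos hf_int hx
  have h2m : (0:ℝ) < 2 - 2*m := by linarith
  have key : c * x^(m-1) ≤ (f x / x) * (fTilde f x)^(1-2*m) := by
    have h1 : c * x^(m-1) * fTilde f x ^ (2*m-1) ≤ f x / x := by
      rw [Real.rpow_sub hx, Real.rpow_one]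
      have heq : c * (x^m / x) * fTilde f x ^(2*m-1) = (c * x^m * fTilde f x^(2*m-1)) / x := by
        ring
      rw [heq]
      gcongr
    calc c * x^(m-1) = c * x^(m-1) * fTilde f x ^ (2*m-1) * (fTilde f x)^(1-2*m) := by
          rw [mul_assoc, ← Real.rpow_add hfx]
          norm_num
      _ ≤ (f x / x) * (fTilde f x)^(1-2*m) := by
          apply mul_le_mul_of_nonneg_right h1 (by positivity)
  have : ((2-2*m)*c/m)*(m*x^(m-1)) = (2-2*m) * (c * x^(m-1)) := by
    field_simp
  rw [this]
  have : (f x / x)*(2-2*m)*(fTilde f x)^(1-2*m) = (2-2*m) * ((f x / x) * (fTilde f x)^(1-2*m)) := by ring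
  rw [this]
  nlinarith [mul_le_mul_of_nonneg_left key h2m.le]
end ode

section ode2
variable {f : ℝ → ℝ} {c m : ℝ} (hc : 0 < c) (hm0 : 1/2 < m) (hm1 : m < 1)
  (hf_cont : ContinuousOn f (Ici 0))
  (hf_pos : ∀ s : ℝ, 0 < s → 0 < f s)
  (hf_int : IntegrableOn (fun z : ℝ => f z / z) (Ioc (0 : ℝ) 1))

include hc hm0 hm1 hf_cont hf_pos hf_int in
lemma g_mono {a : ℝ} (ha : 0 ≤ a)
    (hyp : ∀ x ∈ Ioi a ∩ Ioi (0:ℝ), c * x ^ m * fTilde f x ^ (2*m-1) ≤ f x) :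
    MonotoneOn (fun t => fTilde f t ^ (2-2*m) - ((2-2*m)*c/m)*t^m) (Ioi a ∩ Ioi (0:ℝ)) := by
  have hopen : IsOpen (Ioi a ∩ Ioi (0:ℝ)) := isOpen_Ioi.inter isOpen_Ioi
  apply monotoneOn_of_deriv_nonneg (Convex.inter (convex_Ioi a) (convex_Ioi 0))
  · intro x hx
    exact ((g_hasDeriv hm0 hm1 hf_cont hf_pos hf_int (c := c) hx.2).continuousAt).continuousWithinAt
  · rw [hopen.interior_eq]
    intro x hx
    exact (g_hasDeriv hm0 hm1 hf_cont hf_pos hf_int (c := c) hx.2).differentiableAt.differentiableWithinAt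
  · rw [hopen.interior_eq]
    intro x hx
    rw [(g_hasDeriv hm0 hm1 hf_cont hf_pos hf_int (c := c) hx.2).deriv]
    exact g_deriv_nonneg hc hm0 hm1 hf_cont hf_pos hf_int hx.2 (hyp x hx)

include hc hm0 hm1 hf_cont hf_pos hf_int in
lemma ode_le_one
    (hyp : ∀ s ∈ Ioc (0:ℝ) 1, c * s ^ m * fTilde f s ^ (2*m-1) ≤ f s) :
    ∀ s ∈ Ioc (0:ℝ) 1, ((2-2*m)*c/m) * s^m ≤ fTilde f s ^ (2-2*m) := by
  have hmono' : MonotoneOn (fun t => fTilde f t ^ (2-2*m) - ((2-2*m)*c/m)*t^m) (Ioc (0:ℝ) 1) := by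
    apply monotoneOn_of_deriv_nonneg (convex_Ioc 0 1)
    · intro x hx
      exact ((g_hasDeriv hm0 hm1 hf_cont hf_pos hf_int (c := c) hx.1).continuousAt).continuousWithinAt
    · rw [interior_Ioc]
      intro x hx
      exact (g_hasDeriv hm0 hm1 hf_cont hf_pos hf_int (c := c) hx.1).differentiableAt.differentiableWithinAt
    · rw [interior_Ioc]
      intro x hx
      rw [(g_hasDeriv hm0 hm1 hf_cont hf_pos hf_int (c := c) hx.1).deriv]
      exact g_deriv_nonneg hc hm0 hm1 hf_cont hf_pos hf_int hx.1 (hyp x ⟨hx.1, hx.2.le⟩)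
  intro s hs
  -- g x ≤ g s for x ∈ (0, s], let x → 0⁺
  have hkey : ∀ x ∈ Ioo (0:ℝ) s, -(((2-2*m)*c/m) * x^m) ≤ fTilde f s ^ (2-2*m) - ((2-2*m)*c/m)*s^m := by
    intro x hx
    have hx1 : x ∈ Ioc (0:ℝ) 1 := ⟨hx.1, le_trans hx.2.le hs.2⟩
    have := hmono' hx1 hs (le_of_lt hx.2)
    have hpow : 0 ≤ fTilde f x ^ (2-2*m) := Real.rpow_nonneg (ftilde_nonneg hf_pos x) _
    simp only at this
    linarith
  have hlim : Tendsto (fun x : ℝ => -(((2-2*m)*c/m) * x^m)) (nhdsWithin 0 (Ioi 0)) (nhds 0) := by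
    have h1 : Tendsto (fun x : ℝ => x ^ m) (nhdsWithin 0 (Ioi 0)) (nhds 0) := by
      have := Real.rpow_natCast -- dummy
      have h0 : (0:ℝ) ^ m = 0 := Real.zero_rpow (by positivity)
      have := (Real.continuousAt_rpow_const 0 m (Or.inr (by positivity))).continuousWithinAt (s := Ioi (0:ℝ))
      simpa [ContinuousWithinAt, h0] using this
    have := h1.const_mul ((2-2*m)*c/m)
    simpa using this.neg
  have : ∀ᶠ x in nhdsWithin (0:ℝ) (Ioi 0), -(((2-2*m)*c/m) * x^m) ≤ fTilde f s ^ (2-2*m) - ((2-2*m)*c/m)*s^m := by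
    filter_upwards [Ioo_mem_nhdsGT_of_mem (left_mem_Ico.mpr hs.1)] with x hx
    exact hkey x hx
  have hfin := le_of_tendsto hlim this
  linarith

include hc hm0 hm1 hf_cont hf_pos hf_int in
lemma ode_gt_one
    (hyp : ∀ s : ℝ, 1 < s → c * s ^ m * fTilde f s ^ (2*m-1) ≤ f s) :
    ∃ C : ℝ, 0 < C ∧ ∀ s : ℝ, 1 < s → C * s^m ≤ fTilde f s ^ (2-2*m) := by
  have hf1 := ftilde_pos hf_cont hf_pos hf_int (show (0:ℝ) < 1 by norm_num)
  set B : ℝ := fTilde f 1 ^ (2-2*m) with hB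
  have hBpos : 0 < B := Real.rpow_pos_of_pos hf1 _
  set C0 : ℝ := (2-2*m)*c/m with hC0
  have hC0pos : 0 < C0 := by
    apply div_pos (by nlinarith) (by linarith)
  have hmono : MonotoneOn (fun t => fTilde f t ^ (2-2*m) - C0*t^m) (Ici (1:ℝ)) := by
    apply monotoneOn_of_deriv_nonneg (convex_Ici 1)
    · intro x hx
      exact ((g_hasDeriv hm0 hm1 hf_cont hf_pos hf_int (c := c) (lt_of_lt_of_le zero_lt_one hx)).continuousAt).continuousWithinAt
    · rw [interior_Ici]
      intro x hx
      exact (g_hasDeriv hm0 hm1 hf_cont hf_pos hf_int (c := c) (lt_trans zero_lt_one hx)).differentiableAt.differentiableWithinAt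
    · rw [interior_Ici]
      intro x hx
      rw [(g_hasDeriv hm0 hm1 hf_cont hf_pos hf_int (c := c) (lt_trans zero_lt_one hx)).deriv]
      exact g_deriv_nonneg hc hm0 hm1 hf_cont hf_pos hf_int (lt_trans zero_lt_one hx) (hyp x hx)
  refine ⟨min (C0/2) (B/2), lt_min (by linarith) (by linarith), ?_⟩
  intro s hs
  have hs0 : (0:ℝ) < s := lt_trans zero_lt_one hs
  have hg := hmono (self_mem_Ici) (mem_Ici.mpr hs.le) hs.le
  simp only [Real.one_rpow, mul_one] at hg
  -- hg : B - C0 ≤ fTilde f s ^ (2-2m) - C0 * s^m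
  have hmono2 := ftilde_mono hf_cont hf_pos hf_int hs.le
  have hft : B ≤ fTilde f s ^ (2-2*m) := by
    apply Real.rpow_le_rpow hf1.le hmono2 (by linarith)
  rcases le_total (s^m) 2 with h2 | h2
  · calc min (C0/2) (B/2) * s^m ≤ (B/2) * s^m := by
          apply mul_le_mul_of_nonneg_right (min_le_right _ _) (by positivity)
      _ ≤ (B/2) * 2 := by apply mul_le_mul_of_nonneg_left h2 (by positivity)
      _ = B := by ring
      _ ≤ _ := hft
  · calc min (C0/2) (B/2) * s^m ≤ (C0/2) * s^m := by
          apply mul_le_mul_of_nonneg_right (min_le_left _ _) (by positivity)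
      _ ≤ C0 * s^m - C0 := by nlinarith
      _ ≤ C0 * s^m + (B - C0) := by linarith
      _ ≤ _ := by linarith
end ode2

section big
variable {f : ℝ → ℝ} (hf_cont : ContinuousOn f (Ici 0))
  (hf_pos : ∀ s : ℝ, 0 < s → 0 < f s)
  (hf_int : IntegrableOn (fun z : ℝ => f z / z) (Ioc (0 : ℝ) 1))

include hf_cont hf_pos hf_int in
lemma bigF_le {s : ℝ} (hs : 0 < s) : bigF f s ≤ s * fTilde f s := by
  have hint1 : IntegrableOn f (Ioc 0 s) := by
    exact ((hf_cont.mono (Icc_subset_Ici_self : Icc 0 s ⊆ Ici 0)).integrableOn_Icc).mono_set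
      Ioc_subset_Icc_self
  have hint2 : IntegrableOn (fun z : ℝ => s * (f z / z)) (Ioc 0 s) :=
    (int_on hf_cont hf_int hs).const_mul s
  have : bigF f s ≤ ∫ z in Ioc (0:ℝ) s, s * (f z / z) :=
    setIntegral_mono_on hint1 hint2 measurableSet_Ioc (fun x hx => by
      rw [mul_div_assoc', mul_comm, mul_div_assoc]
      exact le_mul_of_one_le_right (hf_pos x hx.1).le ((one_le_div hx.1).mpr hx.2))
  rwa [integral_const_mul] at this

include hf_cont hf_pos hf_int in
lemma bigFT_le {s : ℝ} (hs : 0 < s) : bigFTilde f s ≤ s * fTilde f s := by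
  have hmono := ftilde_mono hf_cont hf_pos hf_int
  have hint1 : IntegrableOn (fTilde f) (Ioc 0 s) :=
    ((hmono.monotoneOn _).integrableOn_isCompact (isCompact_Icc (a := (0:ℝ)) (b := s))).mono_set
      Ioc_subset_Icc_self
  have h2 : bigFTilde f s ≤ ∫ _ in Ioc (0:ℝ) s, fTilde f s :=
    setIntegral_mono_on hint1 (integrableOn_const (by simp)) measurableSet_Ioc
      (fun x hx => hmono hx.2)
  calc bigFTilde f s ≤ ∫ _ in Ioc (0:ℝ) s, fTilde f s := h2
    _ = s * fTilde f s := by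
        rw [setIntegral_const, Real.volume_real_Ioc_of_le (by linarith), smul_eq_mul]

        ring
  
include hf_pos in
lemma bigF_nonneg (s : ℝ) : 0 ≤ bigF f s :=
  setIntegral_nonneg measurableSet_Ioc (fun x hx => (hf_pos x hx.1).le)

include hf_pos in
lemma bigFT_nonneg (s : ℝ) : 0 ≤ bigFTilde f s :=
  setIntegral_nonneg measurableSet_Ioc (fun x _ => ftilde_nonneg hf_pos x)
end big

lemma rpow_lower {s T A a b q : ℝ} (hs : 0 < s) (hT : 0 ≤ T) (hA : 0 ≤ A) (hq : 0 ≤ q)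
    (h : A * s ^ a ≤ T ^ b) : A ^ q * s ^ (a*q) ≤ T ^ (b*q) := by
  calc A^q * s^(a*q) = (A * s^a)^q := by
        rw [Real.mul_rpow hA (by positivity), ← Real.rpow_mul hs.le]
    _ ≤ (T^b)^q := Real.rpow_le_rpow (by positivity) h hq
    _ = T^(b*q) := (Real.rpow_mul hT b q).symm

lemma main_calc {c0 A s T Fv m d e b q : ℝ} (hs : 0 < s) (hT : 0 < T) (hc0 : 0 ≤ c0)
    (hA : 0 ≤ A) (hq : 0 ≤ q)
    (hfs : c0 * s ^ m * T ^ (2*m-1) ≤ Fv)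
    (hlow : A * s ^ m ≤ T ^ b)
    (h1 : b * q = 2*m - d) (h2 : m + m * q = e) :
    (c0 * A ^ q) * (s ^ e * T ^ d) ≤ Fv * T := by
  have step1 : c0 * s ^ m * T ^ (2*m) ≤ Fv * T := by
    have := mul_le_mul_of_nonneg_right hfs hT.le
    calc c0 * s^m * T^(2*m) = c0 * s^m * T^(2*m-1) * T := by
          rw [mul_assoc, mul_assoc, ← Real.rpow_add_one hT.ne' (2*m-1)]
          ring_nf
      _ ≤ Fv * T := this
  have hlow2 : A^q * s^(m*q) ≤ T^(b*q) := rpow_lower hs hT.le hA hq hlow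
  calc (c0 * A^q) * (s^e * T^d) = c0 * (A^q * s^(m*q)) * (s^m * T^d) := by
        rw [← h2, Real.rpow_add hs]
        ring
    _ ≤ c0 * T^(b*q) * (s^m * T^d) := by
        apply mul_le_mul_of_nonneg_right (mul_le_mul_of_nonneg_left hlow2 hc0) (by positivity)
    _ = c0 * s^m * T^(2*m) := by
        rw [h1]
        rw [show (2*m : ℝ) = (2*m-d) + d by ring, Real.rpow_add hT]
        ring
    _ ≤ Fv * T := step1

lemma main_calc_B {c0 s T T1 Fv m d : ℝ} (hs : 0 < s) (hs1 : s ≤ 1) (hT : 0 < T)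
    (hT1 : T ≤ T1) (hc0 : 0 ≤ c0)
    (hfs : c0 * s ^ m * T ^ (2*m-1) ≤ Fv)
    (hmd : m ≤ d) (hd2 : 2*m - d ≤ 0) :
    (c0 * T1 ^ (2*m-d)) * (s ^ d * T ^ d) ≤ Fv * T := by
  have step1 : c0 * s ^ m * T ^ (2*m) ≤ Fv * T := by
    have := mul_le_mul_of_nonneg_right hfs hT.le
    calc c0 * s^m * T^(2*m) = c0 * s^m * T^(2*m-1) * T := by
          rw [mul_assoc, mul_assoc, ← Real.rpow_add_one hT.ne' (2*m-1)]
          ring_nf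
      _ ≤ Fv * T := this
  have h1 : (1:ℝ) ≤ s ^ (m - d) := Real.one_le_rpow_of_pos_of_le_one_of_nonpos hs hs1 (by linarith)
  have h2 : T1 ^ (2*m-d) ≤ T ^ (2*m-d) := Real.rpow_le_rpow_of_nonpos hT hT1 hd2
  calc (c0 * T1^(2*m-d)) * (s^d * T^d)
      ≤ (c0 * T^(2*m-d)) * ((s^d * s^(m-d)) * T^d) := by
        have hTpos : (0:ℝ) ≤ T^(2*m-d) := by positivity
        have : s^d * 1 ≤ s^d * s^(m-d) := by
          apply mul_le_mul_of_nonneg_left h1 (by positivity)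
        apply mul_le_mul (mul_le_mul_of_nonneg_left h2 hc0) ?_ (by positivity) (by positivity)
        apply mul_le_mul_of_nonneg_right ?_ (by positivity)
        linarith
    _ = c0 * s^m * T^(2*m) := by
        rw [← Real.rpow_add hs, show (d + (m - d) : ℝ) = m by ring,
          show (2*m:ℝ) = (2*m-d) + d by ring, Real.rpow_add hT]
        ring
    _ ≤ Fv * T := step1


set_option maxHeartbeats 1000000 in
/-- growth properties of `f·f̃` under the hypotheses of the
parabolic Liouville theorem. -/
theorem stmt_12 (n : ℕ) (hn : 1 ≤ n) (f : ℝ → ℝ)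
    (hf_cont : ContinuousOn f (Ici 0)) (hf_pos : ∀ s : ℝ, 0 < s → 0 < f s)
    (hf_int : IntegrableOn (fun z : ℝ => f z / z) (Ioc (0 : ℝ) 1))
    (hA : n = 1 ∨ ∃ p : ℝ, 1 < p ∧ p < ((n : ℝ) * ((n : ℝ) + 2)) / ((n : ℝ) - 1) ^ 2 ∧
      ∀ s : ℝ, 0 < s → f s ≤ p * fTilde f s)
    (hB : ∃ c : ℝ, 0 < c ∧ ∃ m₁ m₂ : ℝ,
      2 / 3 < m₂ ∧ m₂ < m₁ ∧ m₁ < 2 * ((n : ℝ) + 2) / (3 * (n : ℝ) + 2) ∧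
      (∀ s ∈ Ioc (0 : ℝ) 1, c * s ^ m₁ * fTilde f s ^ (2 * m₁ - 1) ≤ f s) ∧
      (∀ s : ℝ, 1 < s → c * s ^ m₂ * fTilde f s ^ (2 * m₂ - 1) ≤ f s)) :
    (∃ c' : ℝ, 0 < c' ∧ ∃ γ₁ γ₂ : ℝ,
      1 < γ₂ ∧ γ₂ < γ₁ ∧ (n ≤ 2 ∨ γ₁ < ((n : ℝ) + 2) / ((n : ℝ) - 2)) ∧
      (∀ s : ℝ, 1 < s → c' * s ^ (2 * γ₂) ≤ f s * fTilde f s) ∧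
      (2 ≤ n → ∀ s ∈ Ioc (0 : ℝ) 1, c' * s ^ (2 * γ₁) ≤ f s * fTilde f s)) ∧
    (∃ c'' : ℝ, 0 < c'' ∧ ∃ d₁ d₂ : ℝ,
      1 < d₂ ∧ d₂ < d₁ ∧ d₁ < ((n : ℝ) + 2) / (n : ℝ) ∧
      (∀ s ∈ Ioc (0 : ℝ) 1, c'' * (bigF f s + bigFTilde f s) ^ d₁ ≤ f s * fTilde f s) ∧
      (∀ s : ℝ, 1 < s → c'' * (bigF f s + bigFTilde f s) ^ d₂ ≤ f s * fTilde f s)) := by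
  clear hA
  obtain ⟨c, hc, m₁, m₂, hm2l, hm21, hm1u, hyp1, hyp2⟩ := hB
  have hn1 : (1:ℝ) ≤ (n:ℝ) := by exact_mod_cast hn
  have hmstar : 2 * ((n:ℝ)+2) / (3*(n:ℝ)+2) ≤ 6/5 := by
    rw [div_le_div_iff₀ (by linarith) (by norm_num)]
    nlinarith
  have hm1_6 : m₁ < 6/5 := lt_of_lt_of_le hm1u hmstar
  have hm1key : m₁ * (3*(n:ℝ)+2) < 2*((n:ℝ)+2) := by
    have := (lt_div_iff₀ (show (0:ℝ) < 3*(n:ℝ)+2 by linarith)).mp hm1u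
    linarith
  have hm1half : 1/2 < m₁ := by linarith
  have hm1_2 : m₁ < 2 := by linarith
  set T1 := fTilde f 1 with hT1def
  have hT1 : 0 < T1 := ftilde_pos hf_cont hf_pos hf_int one_pos
  set μ := min m₂ (5/6 : ℝ) with hμdef
  have hμl : 2/3 < μ := lt_min (by linarith) (by norm_num)
  have hμu : μ ≤ 5/6 := min_le_right _ _
  have hμ1 : μ < 1 := by linarith
  have hμm2 : μ ≤ m₂ := min_le_left _ _
  have hμm1 : μ < m₁ := lt_of_le_of_lt hμm2 hm21
  have hμhalf : 1/2 < μ := by linarith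
  have hμden : (0:ℝ) < 2 - 2*μ := by linarith
  -- reduced hypothesis for s > 1 with exponent μ < 1
  set c₂ := c * T1 ^ (2*(m₂-μ)) with hc₂def
  have hc₂ : 0 < c₂ := mul_pos hc (Real.rpow_pos_of_pos hT1 _)
  have hyp2' : ∀ s : ℝ, 1 < s → c₂ * s ^ μ * fTilde f s ^ (2*μ-1) ≤ f s := by
    intro s hs
    have hs0 : (0:ℝ) < s := by linarith
    have hTs : 0 < fTilde f s := ftilde_pos hf_cont hf_pos hf_int hs0
    have hT1s : T1 ≤ fTilde f s := ftilde_mono hf_cont hf_pos hf_int hs.le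
    refine le_trans ?_ (hyp2 s hs)
    calc c₂ * s^μ * fTilde f s ^ (2*μ-1)
        = c * (T1^(2*(m₂-μ)) * s^μ) * fTilde f s ^(2*μ-1) := by ring
      _ ≤ c * (fTilde f s^(2*(m₂-μ)) * s^m₂) * fTilde f s ^(2*μ-1) := by
          have e1 : T1^(2*(m₂-μ)) ≤ fTilde f s^(2*(m₂-μ)) :=
            Real.rpow_le_rpow hT1.le hT1s (by linarith)
          have e2 : s^μ ≤ s^m₂ := Real.rpow_le_rpow_of_exponent_le hs.le hμm2
          have : T1^(2*(m₂-μ)) * s^μ ≤ fTilde f s^(2*(m₂-μ)) * s^m₂ :=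
            mul_le_mul e1 e2 (by positivity) (by positivity)
          apply mul_le_mul_of_nonneg_right (mul_le_mul_of_nonneg_left this hc.le) (by positivity)
      _ = c * s^m₂ * (fTilde f s^(2*(m₂-μ)) * fTilde f s ^(2*μ-1)) := by ring
      _ = c * s^m₂ * fTilde f s ^ (2*m₂-1) := by
          rw [← Real.rpow_add hTs]
          ring_nf
  obtain ⟨C₂, hC₂, hlow2⟩ := ode_gt_one hc₂ hμhalf hμ1 hf_cont hf_pos hf_int hyp2'
  -- part (i), s > 1 bound
  set q₂ := 2*μ/(2-2*μ) with hq₂def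
  have hq₂ : 0 ≤ q₂ := div_nonneg (by linarith) (by linarith)
  set γ₂ := μ/(2-2*μ) with hγ₂def
  have hγ₂ : 1 < γ₂ := by
    rw [hγ₂def, lt_div_iff₀ hμden]
    linarith
  have hbound2 : ∀ s : ℝ, 1 < s → (c₂ * C₂ ^ q₂) * s^(2*γ₂) ≤ f s * fTilde f s := by
    intro s hs
    have hs0 : (0:ℝ) < s := by linarith
    have hTs : 0 < fTilde f s := ftilde_pos hf_cont hf_pos hf_int hs0
    have := main_calc (d := 0) (e := 2*γ₂) hs0 hTs hc₂.le hC₂.le hq₂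
      (hyp2' s hs) (hlow2 s hs) (by rw [hq₂def]; field_simp [(sub_pos.mpr hμ1).ne']; ring)
      (by rw [hq₂def, hγ₂def]; field_simp [(sub_pos.mpr hμ1).ne']; ring)
    simpa [Real.rpow_zero] using this
  have hK2pos : 0 < c₂ * C₂ ^ q₂ := mul_pos hc₂ (Real.rpow_pos_of_pos hC₂ _)
  constructor
  · -- part (i)
    by_cases hn2 : 2 ≤ n
    · -- n ≥ 2 : m₁ < 1
      have hn2' : (2:ℝ) ≤ (n:ℝ) := by exact_mod_cast hn2
      have hm1lt1 : m₁ < 1 := by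
        have : 2 * ((n:ℝ)+2) / (3*(n:ℝ)+2) ≤ 1 := by
          rw [div_le_one (by linarith)]
          linarith
        linarith
      have hm1den : (0:ℝ) < 2 - 2*m₁ := by linarith
      have hlow1 := ode_le_one hc hm1half hm1lt1 hf_cont hf_pos hf_int hyp1
      set A₁ := (2-2*m₁)*c/m₁ with hA₁def
      have hA₁ : 0 < A₁ := div_pos (by nlinarith) (by linarith)
      set q₁ := 2*m₁/(2-2*m₁) with hq₁def
      have hq₁ : 0 ≤ q₁ := div_nonneg (by linarith) (by linarith)
      set γ₁ := m₁/(2-2*m₁) with hγ₁def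
      have hγ₁₂ : γ₂ < γ₁ := by
        rw [hγ₂def, hγ₁def, div_lt_div_iff₀ hμden hm1den]
        ring_nf
        nlinarith [hμm1]
      have hbound1 : ∀ s ∈ Ioc (0:ℝ) 1, (c * A₁ ^ q₁) * s^(2*γ₁) ≤ f s * fTilde f s := by
        intro s hs
        have hTs : 0 < fTilde f s := ftilde_pos hf_cont hf_pos hf_int hs.1
        have := main_calc (d := 0) (e := 2*γ₁) hs.1 hTs hc.le hA₁.le hq₁
          (hyp1 s hs) (hlow1 s hs) (by rw [hq₁def]; field_simp [(sub_pos.mpr hm1lt1).ne']; ring)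
          (by rw [hq₁def, hγ₁def]; field_simp [(sub_pos.mpr hm1lt1).ne']; ring)
        simpa [Real.rpow_zero] using this
      have hK1pos : 0 < c * A₁ ^ q₁ := mul_pos hc (Real.rpow_pos_of_pos hA₁ _)
      refine ⟨min (c₂ * C₂ ^ q₂) (c * A₁ ^ q₁), lt_min hK2pos hK1pos, γ₁, γ₂, hγ₂, hγ₁₂, ?_, ?_, ?_⟩
      · by_cases hn3 : n ≤ 2
        · exact Or.inl hn3
        · right
          have hn3' : (3:ℝ) ≤ (n:ℝ) := by
            have : 3 ≤ n := by omega
            exact_mod_cast this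
          rw [hγ₁def, div_lt_div_iff₀ hm1den (by linarith)]
          nlinarith [hm1key]
      · intro s hs
        refine le_trans ?_ (hbound2 s hs)
        exact mul_le_mul_of_nonneg_right (min_le_left _ _)
          (Real.rpow_nonneg (by linarith) _)
      · intro _ s hs
        refine le_trans ?_ (hbound1 s hs)
        exact mul_le_mul_of_nonneg_right (min_le_right _ _)
          (Real.rpow_nonneg hs.1.le _)
    · -- n = 1
      refine ⟨c₂ * C₂ ^ q₂, hK2pos, γ₂ + 1, γ₂, hγ₂, by linarith, Or.inl (by omega), ?_, ?_⟩
      · exact hbound2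
      · intro h2n; exact absurd h2n hn2
  · -- part (ii)
    set d₁ := 2*m₁/(2-m₁) with hd₁def
    set d₂ := 2*μ/(2-μ) with hd₂def
    have hμden2 : (0:ℝ) < 2 - μ := by linarith
    have hm1den2 : (0:ℝ) < 2 - m₁ := by linarith
    have hd₂1 : 1 < d₂ := by
      rw [hd₂def, lt_div_iff₀ hμden2]; linarith
    have hd₂₁ : d₂ < d₁ := by
      rw [hd₂def, hd₁def, div_lt_div_iff₀ hμden2 hm1den2]; nlinarith
    have hd₁u : d₁ < ((n:ℝ)+2)/(n:ℝ) := by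
      rw [hd₁def, div_lt_div_iff₀ hm1den2 (by linarith)]
      nlinarith [hm1key]
    have hd₁pos : 0 < d₁ := by linarith
    have hd₂pos : 0 < d₂ := by linarith
    -- core bound for s > 1
    set r₂ := (2*μ-d₂)/(2-2*μ) with hr₂def
    have hd₂2μ : d₂ ≤ 2*μ := by
      rw [hd₂def, div_le_iff₀ hμden2]; nlinarith
    have hr₂ : 0 ≤ r₂ := div_nonneg (by linarith) (by linarith)
    have hcore2 : ∀ s : ℝ, 1 < s →
        (c₂ * C₂ ^ r₂) * (s^d₂ * fTilde f s^d₂) ≤ f s * fTilde f s := by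
      intro s hs
      have hs0 : (0:ℝ) < s := by linarith
      have hTs : 0 < fTilde f s := ftilde_pos hf_cont hf_pos hf_int hs0
      exact main_calc (d := d₂) (e := d₂) hs0 hTs hc₂.le hC₂.le hr₂
        (hyp2' s hs) (hlow2 s hs) (by rw [hr₂def]; field_simp [(sub_pos.mpr hμ1).ne'])
        (by rw [hr₂def, hd₂def]; field_simp [(sub_pos.mpr hμ1).ne', hμden2.ne']; ring)
    have hK2'pos : 0 < c₂ * C₂ ^ r₂ := mul_pos hc₂ (Real.rpow_pos_of_pos hC₂ _)
    -- core bound for s ∈ (0,1]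
    obtain ⟨K₁, hK₁pos, hcore1⟩ : ∃ K : ℝ, 0 < K ∧ ∀ s ∈ Ioc (0:ℝ) 1,
        K * (s^d₁ * fTilde f s^d₁) ≤ f s * fTilde f s := by
      by_cases hm1lt1 : m₁ < 1
      · have hm1den : (0:ℝ) < 2 - 2*m₁ := by linarith
        have hlow1 := ode_le_one hc hm1half hm1lt1 hf_cont hf_pos hf_int hyp1
        set A₁ := (2-2*m₁)*c/m₁ with hA₁def
        have hA₁ : 0 < A₁ := div_pos (by nlinarith) (by linarith)
        set r₁ := (2*m₁-d₁)/(2-2*m₁) with hr₁def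
        have hd₁2m : d₁ ≤ 2*m₁ := by
          rw [hd₁def, div_le_iff₀ hm1den2]; nlinarith
        have hr₁ : 0 ≤ r₁ := div_nonneg (by linarith) (by linarith)
        refine ⟨c * A₁ ^ r₁, mul_pos hc (Real.rpow_pos_of_pos hA₁ _), ?_⟩
        intro s hs
        have hTs : 0 < fTilde f s := ftilde_pos hf_cont hf_pos hf_int hs.1
        exact main_calc (d := d₁) (e := d₁) hs.1 hTs hc.le hA₁.le hr₁
          (hyp1 s hs) (hlow1 s hs) (by rw [hr₁def]; field_simp [(sub_pos.mpr hm1lt1).ne'])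
          (by rw [hr₁def, hd₁def]; field_simp [(sub_pos.mpr hm1lt1).ne', hm1den2.ne']; ring)
      · push_neg at hm1lt1
        have hmd : m₁ ≤ d₁ := by
          rw [hd₁def, le_div_iff₀ hm1den2]; nlinarith
        have hd2 : 2*m₁ - d₁ ≤ 0 := by
          rw [hd₁def]
          rw [sub_nonpos, le_div_iff₀ hm1den2]; nlinarith
        refine ⟨c * T1 ^ (2*m₁-d₁), mul_pos hc (Real.rpow_pos_of_pos hT1 _), ?_⟩
        intro s hs
        have hTs : 0 < fTilde f s := ftilde_pos hf_cont hf_pos hf_int hs.1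
        have hT1s : fTilde f s ≤ T1 := ftilde_mono hf_cont hf_pos hf_int hs.2
        exact main_calc_B hs.1 hs.2 hTs hT1s hc.le (hyp1 s hs) hmd hd2
    -- assemble part (ii)
    have h2d₁ : (0:ℝ) < (2:ℝ) ^ d₁ := Real.rpow_pos_of_pos two_pos _
    have h2d₂ : (0:ℝ) < (2:ℝ) ^ d₂ := Real.rpow_pos_of_pos two_pos _
    refine ⟨min (K₁ / 2^d₁) ((c₂ * C₂ ^ r₂) / 2^d₂),
      lt_min (div_pos hK₁pos h2d₁) (div_pos hK2'pos h2d₂), d₁, d₂, hd₂1, hd₂₁, hd₁u, ?_, ?_⟩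
    · intro s hs
      have hTs : 0 < fTilde f s := ftilde_pos hf_cont hf_pos hf_int hs.1
      have hFT : bigF f s + bigFTilde f s ≤ 2*(s * fTilde f s) := by
        have h1 := bigF_le hf_cont hf_pos hf_int hs.1
        have h2 := bigFT_le hf_cont hf_pos hf_int hs.1
        linarith
      have hFTnn : 0 ≤ bigF f s + bigFTilde f s :=
        add_nonneg (bigF_nonneg hf_pos s) (bigFT_nonneg hf_pos s)
      have hpow : (bigF f s + bigFTilde f s) ^ d₁ ≤ 2^d₁ * (s^d₁ * fTilde f s^d₁) := by
        calc (bigF f s + bigFTilde f s) ^ d₁ ≤ (2*(s * fTilde f s))^d₁ :=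
              Real.rpow_le_rpow hFTnn hFT hd₁pos.le
          _ = 2^d₁ * (s^d₁ * fTilde f s^d₁) := by
              rw [Real.mul_rpow (by norm_num) (mul_nonneg hs.1.le hTs.le),
                Real.mul_rpow hs.1.le hTs.le]
      calc min (K₁ / 2^d₁) ((c₂ * C₂ ^ r₂) / 2^d₂) * (bigF f s + bigFTilde f s) ^ d₁
          ≤ (K₁ / 2^d₁) * (2^d₁ * (s^d₁ * fTilde f s^d₁)) :=
            mul_le_mul (min_le_left _ _) hpow (Real.rpow_nonneg hFTnn _)
              (div_pos hK₁pos h2d₁).le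
        _ = K₁ * (s^d₁ * fTilde f s^d₁) := by
            field_simp
        _ ≤ f s * fTilde f s := hcore1 s hs
    · intro s hs
      have hs0 : (0:ℝ) < s := by linarith
      have hTs : 0 < fTilde f s := ftilde_pos hf_cont hf_pos hf_int hs0
      have hFT : bigF f s + bigFTilde f s ≤ 2*(s * fTilde f s) := by
        have h1 := bigF_le hf_cont hf_pos hf_int hs0
        have h2 := bigFT_le hf_cont hf_pos hf_int hs0
        linarith
      have hFTnn : 0 ≤ bigF f s + bigFTilde f s :=
        add_nonneg (bigF_nonneg hf_pos s) (bigFT_nonneg hf_pos s)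
      have hpow : (bigF f s + bigFTilde f s) ^ d₂ ≤ 2^d₂ * (s^d₂ * fTilde f s^d₂) := by
        calc (bigF f s + bigFTilde f s) ^ d₂ ≤ (2*(s * fTilde f s))^d₂ :=
              Real.rpow_le_rpow hFTnn hFT hd₂pos.le
          _ = 2^d₂ * (s^d₂ * fTilde f s^d₂) := by
              rw [Real.mul_rpow (by norm_num) (mul_nonneg hs0.le hTs.le),
                Real.mul_rpow hs0.le hTs.le]
      calc min (K₁ / 2^d₁) ((c₂ * C₂ ^ r₂) / 2^d₂) * (bigF f s + bigFTilde f s) ^ d₂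
          ≤ ((c₂ * C₂ ^ r₂) / 2^d₂) * (2^d₂ * (s^d₂ * fTilde f s^d₂)) :=
            mul_le_mul (min_le_right _ _) hpow (Real.rpow_nonneg hFTnn _)
              (div_pos hK2'pos h2d₂).le
        _ = (c₂ * C₂ ^ r₂) * (s^d₂ * fTilde f s^d₂) := by
            field_simp
        _ ≤ f s * fTilde f s := hcore2 s hs
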